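/- If in addition σ is bounded, i.e. there is C > 0 with σ(y)² ≤ C for all y ∈ ℝ, then Φ(x) → ∞ as x → ∞ and Φ(x) → ∞ as x → −∞. -/

import Mathlib

open MeasureTheory Set Filter Topology ENNReal

lemma ofReal_int_le {μ : Measure ℝ} (f : ℝ → ℝ) (hf : Integrable f μ) :
    ENNReal.ofReal (∫ x, f x ∂μ) ≤ ∫⁻ x, ENNReal.ofReal (f x) ∂μ := by
  have hmax : ∀ a : ℝ, ENNReal.ofReal (max a 0) = ENNReal.ofReal a := by
    intro a
    rcases le_total a 0 with h | h
    · simp [max_eq_right h, ENNReal.ofReal_eq_zero.2 h]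
    · rw [max_eq_left h]
  calc ENNReal.ofReal (∫ x, f x ∂μ)
      ≤ ENNReal.ofReal (∫ x, max (f x) 0 ∂μ) := by
        apply ENNReal.ofReal_le_ofReal
        exact integral_mono hf hf.pos_part (fun x => le_max_left _ _)
    _ = ∫⁻ x, ENNReal.ofReal (max (f x) 0) ∂μ :=
        ofReal_integral_eq_lintegral_ofReal hf.pos_part
          (ae_of_all _ fun x => le_max_right _ _)
    _ = ∫⁻ x, ENNReal.ofReal (f x) ∂μ := by simp_rw [hmax]

lemma key_aux (f₀ : ℝ → ℝ) (hint : Integrable f₀)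
    (hf₀int : ∫ x, f₀ x = 1) (hf₀nn : ∀ x, 0 ≤ f₀ x)
    (k a b : ℝ) (hk : 0 ≤ k) (hab : a ≤ b)
    (g : ℝ → ℝ) (hg : ∀ y ∈ Ioc a b, k * (2 - f₀ y) ≤ g y) :
    ENNReal.ofReal (k * (2 * (b - a) - 1)) ≤ ∫⁻ y, ENNReal.ofReal (g y) := by
  have hmeas : volume (Ioc a b) < ⊤ := by
    rw [Real.volume_Ioc]; exact ENNReal.ofReal_lt_top
  have hconst : IntegrableOn (fun _ : ℝ => (2 : ℝ)) (Ioc a b) := by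
    exact integrableOn_const hmeas.ne
  have hi : Integrable (fun y => k * (2 - f₀ y)) (volume.restrict (Ioc a b)) :=
    (hconst.sub hint.integrableOn).const_mul k
  have hle1 : ∫ y in Ioc a b, f₀ y ≤ 1 := by
    rw [← hf₀int]
    exact setIntegral_le_integral hint (ae_of_all _ hf₀nn)
  have hcalc : ∫ y in Ioc a b, k * (2 - f₀ y) = k * (2 * (b - a) - ∫ y in Ioc a b, f₀ y) := by
    rw [integral_const_mul, integral_sub hconst hint.integrableOn]
    congr 1
    rw [setIntegral_const, Real.volume_real_Ioc_of_le hab, smul_eq_mul]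
    ring
  calc ENNReal.ofReal (k * (2 * (b - a) - 1))
      ≤ ENNReal.ofReal (∫ y in Ioc a b, k * (2 - f₀ y)) := by
        apply ENNReal.ofReal_le_ofReal
        rw [hcalc]
        apply mul_le_mul_of_nonneg_left (by linarith) hk
    _ ≤ ∫⁻ y in Ioc a b, ENNReal.ofReal (k * (2 - f₀ y)) := ofReal_int_le _ hi
    _ ≤ ∫⁻ y in Ioc a b, ENNReal.ofReal (g y) := by
        apply lintegral_mono_ae
        rw [ae_restrict_iff' measurableSet_Ioc]
        exact ae_of_all _ fun y hy => ENNReal.ofReal_le_ofReal (hg y hy)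
    _ ≤ ∫⁻ y, ENNReal.ofReal (g y) := setLIntegral_le_lintegral _ _

theorem stmt_6
    (σ f₀ : ℝ → ℝ)
    (hσc : Continuous σ) (hσpos : ∀ x, 0 < σ x)
    (hf₀c : Continuous f₀) (hf₀pos : ∀ x, 0 < f₀ x)
    (hf₀int : ∫ x, f₀ x = 1)
    (F₀ : ℝ → ℝ) (hF₀ : ∀ x, F₀ x = ∫ y in Iic x, f₀ y)
    (Φ : ℝ → ℝ≥0∞)
    (hΦ : ∀ x, Φ x = ∫⁻ y, ENNReal.ofReal
        (((Ioi x).indicator (fun _ => (1 : ℝ)) y - F₀ y) ^ 2 / (σ y ^ 2 * f₀ y)))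
    (C : ℝ) (hC : 0 < C) (hσbdd : ∀ y, σ y ^ 2 ≤ C) :
    Tendsto Φ atTop (𝓝 ⊤) ∧ Tendsto Φ atBot (𝓝 ⊤) := by
  have hint : Integrable f₀ := by
    by_contra h
    rw [integral_undef h] at hf₀int
    norm_num at hf₀int
  have hmono : Monotone F₀ := by
    intro u v huv
    rw [hF₀ u, hF₀ v]
    exact setIntegral_mono_set hint.integrableOn (ae_of_all _ fun y => (hf₀pos y).le)
      (HasSubset.Subset.eventuallyLE (Iic_subset_Iic.2 huv))
  have hF0pos : 0 < F₀ 0 := by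
    rw [hF₀ 0]
    rw [setIntegral_pos_iff_support_of_nonneg_ae
      (ae_of_all _ fun y => (hf₀pos y).le) hint.integrableOn]
    have : Function.support f₀ = univ := Set.eq_univ_of_forall fun y => (hf₀pos y).ne'
    rw [this, Set.univ_inter, Real.volume_Iic]
    exact ENNReal.zero_lt_top
  have hF0lt : F₀ 0 < 1 := by
    have h2 : 0 < ∫ y in Ioi (0:ℝ), f₀ y := by
      rw [setIntegral_pos_iff_support_of_nonneg_ae
        (ae_of_all _ fun y => (hf₀pos y).le) hint.integrableOn]
      have : Function.support f₀ = univ := Set.eq_univ_of_forall fun y => (hf₀pos y).ne'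
      rw [this, Set.univ_inter, Real.volume_Ioi]
      exact ENNReal.zero_lt_top
    have h3 : F₀ 0 + ∫ y in Ioi (0:ℝ), f₀ y = 1 := by
      rw [hF₀ 0, ← hf₀int, ← compl_Iic]
      exact integral_add_compl measurableSet_Iic hint
    linarith
  constructor
  · -- atTop
    set c := F₀ 0 with hc
    set k := c ^ 2 / C with hk
    have hkpos : 0 < k := div_pos (pow_pos hF0pos 2) hC
    apply tendsto_nhds_top_mono (f := fun x => ENNReal.ofReal (k * (2 * (x - 0) - 1)))
    · apply ENNReal.tendsto_ofReal_atTop.comp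
      apply Tendsto.const_mul_atTop hkpos
      apply tendsto_atTop_add_const_right
      simpa using (tendsto_id (α := ℝ)).const_mul_atTop two_pos
    · filter_upwards [eventually_ge_atTop (0:ℝ)] with x hx
      rw [hΦ x]
      apply key_aux f₀ hint hf₀int (fun y => (hf₀pos y).le) k 0 x hkpos.le hx
      intro y hy
      have hy1 : (0:ℝ) < y := hy.1
      have hy2 : y ≤ x := hy.2
      have hind : (Ioi x).indicator (fun _ => (1:ℝ)) y = 0 :=
        Set.indicator_of_notMem (by simpa using hy2) _
      rw [hind]
      have hcy : c ≤ F₀ y := hmono hy1.le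
      have h1 : 2 - f₀ y ≤ 1 / f₀ y := by
        rw [le_div_iff₀ (hf₀pos y)]
        nlinarith [sq_nonneg (f₀ y - 1)]
      have h2 : k * (2 - f₀ y) ≤ c ^ 2 / (C * f₀ y) := by
        have : k * (1 / f₀ y) = c ^ 2 / (C * f₀ y) := by
          rw [hk]; field_simp
        rw [← this]
        exact mul_le_mul_of_nonneg_left h1 hkpos.le
      apply h2.trans
      rw [zero_sub, neg_sq]
      gcongr
      · exact (mul_pos (pow_pos (hσpos y) 2) (hf₀pos y))
      · exact (hf₀pos y).le
      · exact hσbdd y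
  · -- atBot
    set c := 1 - F₀ 0 with hc
    have hcpos : 0 < c := by rw [hc]; linarith
    set k := c ^ 2 / C with hk
    have hkpos : 0 < k := div_pos (pow_pos hcpos 2) hC
    apply tendsto_nhds_top_mono (f := fun x => ENNReal.ofReal (k * (2 * (0 - x) - 1)))
    · apply ENNReal.tendsto_ofReal_atTop.comp
      apply Tendsto.const_mul_atTop hkpos
      apply tendsto_atTop_add_const_right
      have h0 : Tendsto (fun x : ℝ => 0 - x) atBot atTop := by
        simpa using (tendsto_neg_atBot_atTop : Tendsto (fun x:ℝ => -x) atBot atTop)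
      exact h0.const_mul_atTop two_pos
    · filter_upwards [eventually_le_atBot (0:ℝ)] with x hx
      rw [hΦ x]
      apply key_aux f₀ hint hf₀int (fun y => (hf₀pos y).le) k x 0 hkpos.le hx
      intro y hy
      have hy1 : x < y := hy.1
      have hy2 : y ≤ 0 := hy.2
      have hind : (Ioi x).indicator (fun _ => (1:ℝ)) y = 1 :=
        Set.indicator_of_mem hy1 _
      rw [hind]
      have hcy : c ≤ 1 - F₀ y := by
        have := hmono hy2
        rw [hc]; linarith
      have h1 : 2 - f₀ y ≤ 1 / f₀ y := by
        rw [le_div_iff₀ (hf₀pos y)]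
        nlinarith [sq_nonneg (f₀ y - 1)]
      have h2 : k * (2 - f₀ y) ≤ c ^ 2 / (C * f₀ y) := by
        have : k * (1 / f₀ y) = c ^ 2 / (C * f₀ y) := by
          rw [hk]; field_simp
        rw [← this]
        exact mul_le_mul_of_nonneg_left h1 hkpos.le
      apply h2.trans
      gcongr
      · exact (mul_pos (pow_pos (hσpos y) 2) (hf₀pos y))
      · exact (hf₀pos y).le
      · exact hσbdd y
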